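/- Let E_r be the r-generated unital Grassmann algebra over a field of characteristic ≠ 2, and let k satisfy 2k > r. Then [f1,f2][f3,f4]···[f_{2k-1},f_{2k}] = 0 for all f1,...,f_{2k} ∈ E_r. -/

import Mathlib

/-- The `i`-th generator of the Grassmann algebra `E = Λ(F^{(ℕ)})`. -/
noncomputable def grassmannGen (F : Type*) [Field F] (i : ℕ) :
    ExteriorAlgebra F (ℕ →₀ F) :=
  ExteriorAlgebra.ι F (Finsupp.single i 1)

section Aux

variable (F : Type*) [Field F]

local notation "E" => ExteriorAlgebra F (ℕ →₀ F)

/-- Monomials in the first `r` generators of length at least `d`. -/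
def grassMonSet (r d : ℕ) : Set (ExteriorAlgebra F (ℕ →₀ F)) :=
  {x | ∃ l : List ℕ, (∀ i ∈ l, i < r) ∧ d ≤ l.length ∧
      x = (l.map (grassmannGen F)).prod}

/-- Span of monomials of length ≥ d. -/
noncomputable def grassS (r d : ℕ) : Submodule F (ExteriorAlgebra F (ℕ →₀ F)) :=
  Submodule.span F (grassMonSet F r d)

variable {F}

lemma gen_sq (i : ℕ) : grassmannGen F i * grassmannGen F i = 0 :=
  ExteriorAlgebra.ι_sq_zero _

lemma gen_swap (i j : ℕ) :
    grassmannGen F i * grassmannGen F j = -(grassmannGen F j * grassmannGen F i) := by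
  unfold grassmannGen
  exact eq_neg_of_add_eq_zero_left (ExteriorAlgebra.ι_add_mul_swap _ _)

lemma gen_mem_mul_zero {i : ℕ} : ∀ {l : List ℕ}, i ∈ l →
    grassmannGen F i * (l.map (grassmannGen F)).prod = 0 := by
  intro l
  induction l with
  | nil => simp
  | cons a t ih =>
    intro hi
    rw [List.map_cons, List.prod_cons, ← mul_assoc]
    rcases List.mem_cons.1 hi with h | h
    · rw [h, gen_sq, zero_mul]
    · rw [gen_swap, neg_mul, mul_assoc, ih h, mul_zero, neg_zero]

lemma not_nodup_prod_zero : ∀ {l : List ℕ}, ¬ l.Nodup →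
    (l.map (grassmannGen F)).prod = 0 := by
  intro l
  induction l with
  | nil => intro h; exact absurd List.nodup_nil h
  | cons a t ih =>
    intro h
    rw [List.map_cons, List.prod_cons]
    by_cases ha : a ∈ t
    · exact gen_mem_mul_zero ha
    · have ht : ¬ t.Nodup := by
        intro hn; exact h (List.nodup_cons.2 ⟨ha, hn⟩)
      rw [ih ht, mul_zero]

lemma grassMon_zero {r d : ℕ} (hd : r < d) {x : ExteriorAlgebra F (ℕ →₀ F)}
    (hx : x ∈ grassMonSet F r d) : x = 0 := by
  obtain ⟨l, hlr, hld, rfl⟩ := hx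
  apply not_nodup_prod_zero
  intro hn
  have h1 : l.toFinset.card = l.length := List.toFinset_card_of_nodup hn
  have h2 : l.toFinset ⊆ Finset.range r := fun i hi =>
    Finset.mem_range.2 (hlr i (List.mem_toFinset.1 hi))
  have := Finset.card_le_card h2
  rw [h1, Finset.card_range] at this
  omega

lemma grassS_zero {r d : ℕ} (hd : r < d) : grassS F r d = ⊥ := by
  rw [grassS, ← Submodule.span_empty (R := F)]
  apply Submodule.span_eq_span
  · intro x hx
    have : x = 0 := grassMon_zero hd hx
    simp [this]
  · simp

lemma grassS_mul {r a b : ℕ} {x y : ExteriorAlgebra F (ℕ →₀ F)}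
    (hx : x ∈ grassS F r a) (hy : y ∈ grassS F r b) : x * y ∈ grassS F r (a + b) := by
  have h : grassS F r a * grassS F r b ≤ grassS F r (a + b) := by
    rw [grassS, grassS, Submodule.span_mul_span]
    apply Submodule.span_le.2
    rintro _ ⟨u, hu, v, hv, rfl⟩
    obtain ⟨l1, h1r, h1d, rfl⟩ := hu
    obtain ⟨l2, h2r, h2d, rfl⟩ := hv
    apply Submodule.subset_span
    refine ⟨l1 ++ l2, ?_, ?_, ?_⟩
    · intro i hi
      rcases List.mem_append.1 hi with h | h
      · exact h1r i h
      · exact h2r i h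
    · rw [List.length_append]; omega
    · rw [List.map_append, List.prod_append]
  exact h (Submodule.mul_mem_mul hx hy)

/-- Elements of the adjoin are in the span of monomials. -/
lemma adjoin_subset_grassS {r : ℕ} {x : ExteriorAlgebra F (ℕ →₀ F)}
    (hx : x ∈ Algebra.adjoin F {x | ∃ i < r, x = grassmannGen F i}) :
    x ∈ grassS F r 0 := by
  have h := Algebra.adjoin_eq_span (R := F)
    (s := {x : ExteriorAlgebra F (ℕ →₀ F) | ∃ i < r, x = grassmannGen F i})
  have hx' : x ∈ Submodule.span F
      (Submonoid.closure {x : ExteriorAlgebra F (ℕ →₀ F) | ∃ i < r, x = grassmannGen F i} :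
        Set (ExteriorAlgebra F (ℕ →₀ F))) := by
    rw [← h]; exact hx
  refine Submodule.span_mono ?_ hx'
  intro y hy
  obtain ⟨l, hl, rfl⟩ := Submonoid.exists_list_of_mem_closure hy
  clear hy hx hx'
  induction l with
  | nil => exact ⟨[], by simp, by simp, by simp⟩
  | cons a t ih =>
    obtain ⟨i, hir, ha⟩ := hl a List.mem_cons_self
    obtain ⟨l', hl'r, _, hl'⟩ := ih (fun y hy => hl y (List.mem_cons_of_mem a hy))
    refine ⟨i :: l', ?_, by simp, ?_⟩
    · intro j hj
      rcases List.mem_cons.1 hj with h | h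
      · subst h; exact hir
      · exact hl'r j h
    · rw [List.prod_cons, List.map_cons, List.prod_cons, ha, hl']

lemma comm_mon_mon {r : ℕ} {x y : ExteriorAlgebra F (ℕ →₀ F)}
    (hx : x ∈ grassMonSet F r 0) (hy : y ∈ grassMonSet F r 0) :
    x * y - y * x ∈ grassS F r 2 := by
  obtain ⟨l1, h1r, -, rfl⟩ := hx
  obtain ⟨l2, h2r, -, rfl⟩ := hy
  rcases l1 with _ | ⟨a, t1⟩
  · simp
  rcases l2 with _ | ⟨b, t2⟩
  · simp
  have hmem : ∀ (u v : List ℕ), (∀ i ∈ u, i < r) → (∀ i ∈ v, i < r) →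
      1 ≤ u.length → 1 ≤ v.length →
      (u.map (grassmannGen F)).prod * (v.map (grassmannGen F)).prod ∈ grassS F r 2 := by
    intro u v hur hvr hu hv
    apply Submodule.subset_span
    refine ⟨u ++ v, ?_, ?_, ?_⟩
    · intro i hi
      rcases List.mem_append.1 hi with h | h
      · exact hur i h
      · exact hvr i h
    · rw [List.length_append]; omega
    · rw [List.map_append, List.prod_append]
  exact sub_mem (hmem _ _ h1r h2r (by simp) (by simp))
    (hmem _ _ h2r h1r (by simp) (by simp))

lemma comm_mon_S {r : ℕ} {x y : ExteriorAlgebra F (ℕ →₀ F)}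
    (hx : x ∈ grassMonSet F r 0) (hy : y ∈ grassS F r 0) :
    x * y - y * x ∈ grassS F r 2 := by
  induction hy using Submodule.span_induction with
  | mem z hz => exact comm_mon_mon hx hz
  | zero => simp
  | add a b _ _ ha hb =>
    have : x * (a + b) - (a + b) * x = (x * a - a * x) + (x * b - b * x) := by
      rw [mul_add, add_mul]; abel
    rw [this]; exact add_mem ha hb
  | smul c a _ ha =>
    have : x * (c • a) - (c • a) * x = c • (x * a - a * x) := by
      rw [mul_smul_comm, smul_mul_assoc, smul_sub]
    rw [this]; exact Submodule.smul_mem _ c ha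

lemma comm_mem_grassS {r : ℕ} {x y : ExteriorAlgebra F (ℕ →₀ F)}
    (hx : x ∈ grassS F r 0) (hy : y ∈ grassS F r 0) :
    x * y - y * x ∈ grassS F r 2 := by
  induction hx using Submodule.span_induction with
  | mem z hz => exact comm_mon_S hz hy
  | zero => simp
  | add a b _ _ ha hb =>
    have : (a + b) * y - y * (a + b) = (a * y - y * a) + (b * y - y * b) := by
      rw [mul_add, add_mul]; abel
    rw [this]; exact add_mem ha hb
  | smul c a _ ha =>
    have : (c • a) * y - y * (c • a) = c • (a * y - y * a) := by
      rw [mul_smul_comm, smul_mul_assoc, smul_sub]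
    rw [this]; exact Submodule.smul_mem _ c ha

lemma list_prod_mem_grassS {r : ℕ} : ∀ (L : List (ExteriorAlgebra F (ℕ →₀ F))),
    (∀ x ∈ L, x ∈ grassS F r 2) → L.prod ∈ grassS F r (2 * L.length) := by
  intro L
  induction L with
  | nil =>
    intro _
    exact Submodule.subset_span ⟨[], by simp, by simp, by simp⟩
  | cons a t ih =>
    intro h
    rw [List.prod_cons, List.length_cons]
    have : 2 * (t.length + 1) = 2 + 2 * t.length := by ring
    rw [this]
    exact grassS_mul (h a List.mem_cons_self)
      (ih (fun x hx => h x (List.mem_cons_of_mem a hx)))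

end Aux

/-- in the `r`-generated Grassmann algebra `E_r` (the unital subalgebra of
`E` generated by the first `r` generators) over a field of characteristic ≠ 2, if
`2k > r` then any product `[f1,f2][f3,f4]⋯[f_{2k-1},f_{2k}]` of `k` commutators of
elements of `E_r` vanishes. -/
theorem grassmann_Er_prod_commutators_eq_zero
    (F : Type*) [Field F] (h2 : (2 : F) ≠ 0) (r k : ℕ) (hrk : r < 2 * k)
    (f : ℕ → ExteriorAlgebra F (ℕ →₀ F))
    (hf : ∀ s, 1 ≤ s → s ≤ 2 * k →
      f s ∈ Algebra.adjoin F {x | ∃ i < r, x = grassmannGen F i}) :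
    (List.ofFn fun s : Fin k =>
      f (2 * s + 1) * f (2 * s + 2) - f (2 * s + 2) * f (2 * s + 1)).prod = 0 := by
  have hmem : (List.ofFn fun s : Fin k =>
      f (2 * s + 1) * f (2 * s + 2) - f (2 * s + 2) * f (2 * s + 1)).prod ∈
      grassS F r (2 * k) := by
    have hlen : (List.ofFn fun s : Fin k =>
        f (2 * s + 1) * f (2 * s + 2) - f (2 * s + 2) * f (2 * s + 1)).length = k := by
      simp
    have := list_prod_mem_grassS (r := r) (List.ofFn fun s : Fin k =>
        f (2 * s + 1) * f (2 * s + 2) - f (2 * s + 2) * f (2 * s + 1)) ?_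
    · rwa [hlen] at this
    · intro x hx
      rw [List.mem_ofFn] at hx
      obtain ⟨s, rfl⟩ := hx
      have hs := s.isLt
      have h1 := hf (2 * s + 1) (by omega) (by omega)
      have h2' := hf (2 * s + 2) (by omega) (by omega)
      exact comm_mem_grassS (adjoin_subset_grassS h1) (adjoin_subset_grassS h2')
  rw [grassS_zero hrk] at hmem
  simpa using hmem
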